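/- arXiv:1402.4220 — 3 statements merged into one kernel-verified Lean document; each statement's English description precedes it below -/
import Mathlib

section
/- Let T : H₁ → H₂ be an isometry between Hilbert spaces, K₁ ⊆ H₁ and K₂ ⊆ H₂ closed subspaces with T(K₁) ⊆ K₂, and let T̃ be the restriction of T. Set N₁ = H₁ ⊖ K₁, N₂ = H₂ ⊖ K₂ and L = (closed span of N₂ ∪ T N₁) ⊖ N₂. Then ker T̃* = L ⊕ (ker T* ∩ K₂), an orthogonal direct sum. -/
open ContinuousLinearMap

/-- For an isometry T with T K₁ ⊆ K₂, ker T̃* = L ⊕ (ker T* ∩ K₂), an orthogonal direct sum,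
where L = (closed span of N₂ ∪ T N₁) ⊖ N₂, N₁ = K₁ᗮ, N₂ = K₂ᗮ. -/
theorem stmt_2
    {H₁ H₂ : Type*} [NormedAddCommGroup H₁] [InnerProductSpace ℂ H₁] [CompleteSpace H₁]
    [NormedAddCommGroup H₂] [InnerProductSpace ℂ H₂] [CompleteSpace H₂]
    (T : H₁ →L[ℂ] H₂) (hT : ∀ x, ‖T x‖ = ‖x‖)
    (K₁ : Submodule ℂ H₁) (K₂ : Submodule ℂ H₂)
    [CompleteSpace K₁] [CompleteSpace K₂]
    (hTK : ∀ x ∈ K₁, T x ∈ K₂)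
    (Tt : K₁ →L[ℂ] K₂) (hTt : ∀ x : K₁, (Tt x : H₂) = T x)
    (L : Submodule ℂ H₂)
    (hL : L = (K₂ᗮ ⊔ Submodule.map (T : H₁ →ₗ[ℂ] H₂) K₁ᗮ).topologicalClosure ⊓ (K₂ᗮ)ᗮ) :
    (∀ l ∈ L, ∀ k ∈ LinearMap.ker ((adjoint T : H₂ →L[ℂ] H₁) : H₂ →ₗ[ℂ] H₁) ⊓ K₂, (inner ℂ l k : ℂ) = 0) ∧
    Submodule.map K₂.subtype (LinearMap.ker ((adjoint Tt : K₂ →L[ℂ] K₁) : K₂ →ₗ[ℂ] K₁)) =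
      L ⊔ (LinearMap.ker ((adjoint T : H₂ →L[ℂ] H₁) : H₂ →ₗ[ℂ] H₁) ⊓ K₂) := by
  have hinner : ∀ x y : H₁, (inner ℂ (T x) (T y) : ℂ) = inner ℂ x y := fun x y =>
    LinearIsometry.inner_map_map ⟨T.toLinearMap, hT⟩ x y
  set M := (K₂ᗮ ⊔ Submodule.map (T : H₁ →ₗ[ℂ] H₂) K₁ᗮ).topologicalClosure with hM
  haveI : CompleteSpace M :=
    (K₂ᗮ ⊔ Submodule.map (T : H₁ →ₗ[ℂ] H₂) K₁ᗮ).isClosed_topologicalClosure.completeSpace_coe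
  have hK2 : (K₂ᗮ)ᗮ = K₂ := K₂.orthogonal_orthogonal
  have hMperp : Mᗮ = K₂ ⊓ (Submodule.map (T : H₁ →ₗ[ℂ] H₂) K₁ᗮ)ᗮ := by
    rw [hM, ← Submodule.orthogonal_orthogonal_eq_closure, Submodule.triorthogonal_eq_orthogonal,
      ← Submodule.inf_orthogonal, hK2]
  have hkerT : ∀ y : H₂, y ∈ LinearMap.ker ((adjoint T : H₂ →L[ℂ] H₁) : H₂ →ₗ[ℂ] H₁) ↔
      ∀ x : H₁, (inner ℂ (T x) y : ℂ) = 0 := by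
    intro y
    constructor
    · intro h x
      rw [← adjoint_inner_right]
      simp [(show adjoint T y = 0 from LinearMap.mem_ker.mp h)]
    · intro h
      rw [LinearMap.mem_ker]
      refine ext_inner_left ℂ fun v => ?_
      rw [ContinuousLinearMap.coe_coe, adjoint_inner_right, inner_zero_right]
      exact h v
  -- elements of ker T* ⊓ K₂ lie in Mᗮ
  have hkM : ∀ y ∈ LinearMap.ker ((adjoint T : H₂ →L[ℂ] H₁) : H₂ →ₗ[ℂ] H₁) ⊓ K₂, y ∈ Mᗮ := by
    intro y hy
    rw [hMperp, Submodule.mem_inf]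
    refine ⟨hy.2, (Submodule.mem_orthogonal _ _).mpr ?_⟩
    rintro u ⟨n, hn, rfl⟩
    exact (hkerT y).mp hy.1 n
  -- L is orthogonal to T K₁
  have hLT : ∀ l ∈ L, ∀ x ∈ K₁, (inner ℂ (T x) l : ℂ) = 0 := by
    intro l hl x hx
    rw [hL] at hl
    have hTxM : T x ∈ Mᗮ := by
      rw [hMperp, Submodule.mem_inf]
      refine ⟨hTK x hx, (Submodule.mem_orthogonal _ _).mpr ?_⟩
      rintro u ⟨n, hn, rfl⟩
      rw [ContinuousLinearMap.coe_coe, hinner]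
      exact (Submodule.mem_orthogonal' K₁ n).mp hn x hx
    rw [← inner_eq_zero_symm]
    exact (Submodule.mem_orthogonal M (T x)).mp hTxM l hl.1
  -- characterization of the embedded kernel of Tt*
  have hS : ∀ y : H₂, y ∈ Submodule.map K₂.subtype (LinearMap.ker ((adjoint Tt : K₂ →L[ℂ] K₁) : K₂ →ₗ[ℂ] K₁)) ↔
      y ∈ K₂ ∧ ∀ x ∈ K₁, (inner ℂ (T x) y : ℂ) = 0 := by
    intro y
    constructor
    · rintro ⟨k, hk, rfl⟩
      refine ⟨k.2, fun x hx => ?_⟩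
      have : (inner ℂ (Tt ⟨x, hx⟩) k : ℂ) = 0 := by
        rw [← adjoint_inner_right, (show adjoint Tt k = 0 from LinearMap.mem_ker.mp hk), inner_zero_right]
      rwa [Submodule.coe_inner, hTt] at this
    · rintro ⟨hy, h⟩
      refine ⟨⟨y, hy⟩, ?_, rfl⟩
      show adjoint Tt ⟨y, hy⟩ = 0
      refine ext_inner_left ℂ fun v => ?_
      rw [adjoint_inner_right, inner_zero_right, Submodule.coe_inner, hTt]
      exact h v v.2
  constructor
  · intro l hl k hk
    exact (Submodule.mem_orthogonal M k).mp (hkM k hk) l ((hL ▸ hl).1)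
  · apply le_antisymm
    · intro y hy
      obtain ⟨hyK, hy2⟩ := (hS y).mp hy
      obtain ⟨m, hm, m', hm', rfl⟩ := M.exists_add_mem_mem_orthogonal y
      have hm'2 := hMperp ▸ hm'
      have hmK : m ∈ K₂ := by
        rw [(add_sub_cancel_right m m').symm]
        exact K₂.sub_mem hyK hm'2.1
      have hmL : m ∈ L := hL ▸ ⟨hm, hK2.symm ▸ hmK⟩
      have hm'ker : m' ∈ LinearMap.ker ((adjoint T : H₂ →L[ℂ] H₁) : H₂ →ₗ[ℂ] H₁) ⊓ K₂ := by
        refine ⟨(hkerT m').mpr fun h => ?_, hm'2.1⟩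
        obtain ⟨x, hx, n, hn, rfl⟩ := K₁.exists_add_mem_mem_orthogonal h
        have h1 : (inner ℂ (T x) m' : ℂ) = 0 := by
          have : (inner ℂ (T x) (m + m') : ℂ) = 0 := hy2 x hx
          rw [inner_add_right, hLT m hmL x hx, zero_add] at this
          exact this
        have h2 : (inner ℂ (T n) m' : ℂ) = 0 :=
          (Submodule.mem_orthogonal _ m').mp hm'2.2 (T n) ⟨n, hn, rfl⟩
        rw [map_add, inner_add_left, h1, h2, add_zero]
      exact Submodule.add_mem_sup hmL hm'ker
    · apply sup_le
      · intro l hl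
        exact (hS l).mpr ⟨hK2 ▸ (hL ▸ hl).2, hLT l hl⟩
      · intro y hy
        exact (hS y).mpr ⟨hy.2, fun x _ => (hkerT y).mp hy.1 x⟩
end

section
/- Let T : H₁ → H₂ be an isometry between Hilbert spaces, K₁ ⊆ H₁ and K₂ ⊆ H₂ closed subspaces with T(K₁) ⊆ K₂. With N₁ = K₁^⊥, N₂ = K₂^⊥, L = (closed span of N₂ ∪ T N₁) ⊖ N₂, and T̃ the restriction of T, one has ker T̃* = closed span of L and P_{K₂}(ker T*). -/
open ContinuousLinearMap

open scoped InnerProductSpace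

/-- If `A ⊥ B`, then any element of the closure of `A ⊔ B` orthogonal to `B`
lies in the closure of `A`. -/
private lemma aux_clos {E : Type*} [NormedAddCommGroup E] [InnerProductSpace ℂ E]
    [CompleteSpace E] {A B : Submodule ℂ E} (hAB : A ≤ Bᗮ) {u : E}
    (hu : u ∈ (A ⊔ B).topologicalClosure ⊓ Bᗮ) : u ∈ A.topologicalClosure := by
  obtain ⟨hu1, hu2⟩ := hu
  haveI : CompleteSpace A.topologicalClosure := A.isClosed_topologicalClosure.completeSpace_coe
  set a : E := (A.topologicalClosure.orthogonalProjectionOnto u : E) with ha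
  have haC : a ∈ A.topologicalClosure := (A.topologicalClosure.orthogonalProjectionOnto u).2
  have hac : u - a ∈ A.topologicalClosureᗮ := Submodule.sub_starProjection_mem_orthogonal u
  have hCB : A.topologicalClosure ≤ Bᗮ :=
    A.topologicalClosure_minimal hAB B.isClosed_orthogonal
  have hcB : u - a ∈ Bᗮ := sub_mem hu2 (hCB haC)
  have hcA : u - a ∈ Aᗮ := Submodule.orthogonal_le A.le_topologicalClosure hac
  have hcsup : u - a ∈ ((A ⊔ B).topologicalClosure)ᗮ := by
    rw [← Submodule.orthogonal_orthogonal_eq_closure, Submodule.triorthogonal_eq_orthogonal,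
      ← Submodule.inf_orthogonal]
    exact ⟨hcA, hcB⟩
  have h1 : ⟪u, u - a⟫_ℂ = 0 := Submodule.inner_right_of_mem_orthogonal hu1 hcsup
  have h2 : ⟪a, u - a⟫_ℂ = 0 := Submodule.inner_right_of_mem_orthogonal haC hac
  have h3 : ⟪u - a, u - a⟫_ℂ = 0 := by rw [inner_sub_left, h1, h2, sub_zero]
  have h4 : u - a = 0 := inner_self_eq_zero.1 h3
  rw [sub_eq_zero] at h4
  rw [h4]; exact haC

/-- For an isometry T with T K₁ ⊆ K₂, ker T̃* = closed span of L and P_{K₂}(ker T*). -/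
theorem stmt_3
    {H₁ H₂ : Type*} [NormedAddCommGroup H₁] [InnerProductSpace ℂ H₁] [CompleteSpace H₁]
    [NormedAddCommGroup H₂] [InnerProductSpace ℂ H₂] [CompleteSpace H₂]
    (T : H₁ →L[ℂ] H₂) (hT : ∀ x, ‖T x‖ = ‖x‖)
    (K₁ : Submodule ℂ H₁) (K₂ : Submodule ℂ H₂)
    [CompleteSpace K₁] [CompleteSpace K₂]
    (hTK : ∀ x ∈ K₁, T x ∈ K₂)
    (Tt : K₁ →L[ℂ] K₂) (hTt : ∀ x : K₁, (Tt x : H₂) = T x)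
    (L : Submodule ℂ H₂)
    (hL : L = (K₂ᗮ ⊔ Submodule.map (T : H₁ →ₗ[ℂ] H₂) K₁ᗮ).topologicalClosure ⊓ (K₂ᗮ)ᗮ) :
    Submodule.map K₂.subtype (LinearMap.ker (adjoint Tt : K₂ →ₗ[ℂ] K₁)) =
      (L ⊔ Submodule.map ((K₂.subtypeL ∘L K₂.orthogonalProjectionOnto : H₂ →L[ℂ] H₂) : H₂ →ₗ[ℂ] H₂)
        (LinearMap.ker (adjoint T : H₂ →ₗ[ℂ] H₁))).topologicalClosure := by
  have hinner : ∀ x y : H₁, ⟪T x, T y⟫_ℂ = ⟪x, y⟫_ℂ := fun x y =>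
    ({ toLinearMap := (T : H₁ →ₗ[ℂ] H₂), norm_map' := hT } : H₁ →ₗᵢ[ℂ] H₂).inner_map_map x y
  set M := Submodule.map (T : H₁ →ₗ[ℂ] H₂) K₁ with hM
  set TN := Submodule.map (T : H₁ →ₗ[ℂ] H₂) K₁ᗮ with hTN
  set kT := LinearMap.ker (adjoint T : H₂ →ₗ[ℂ] H₁) with hkT
  set P := K₂.subtypeL ∘L K₂.orthogonalProjectionOnto with hPdef
  have hPapp : ∀ v : H₂, P v = (K₂.orthogonalProjectionOnto v : H₂) := fun v => rfl
  have hPmem : ∀ v : H₂, P v ∈ K₂ := fun v => (K₂.orthogonalProjectionOnto v).2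
  have hPsub : ∀ v : H₂, v - P v ∈ K₂ᗮ := fun v => Submodule.sub_starProjection_mem_orthogonal v
  have hMK : M ≤ K₂ := by rintro _ ⟨x, hx, rfl⟩; exact hTK x hx
  have hTN_M : TN ≤ Mᗮ := by
    rintro _ ⟨n, hn, rfl⟩
    rw [Submodule.mem_orthogonal]
    rintro _ ⟨x, hx, rfl⟩
    rw [ContinuousLinearMap.coe_coe, hinner]
    exact Submodule.inner_right_of_mem_orthogonal hx hn
  have hM_TN : M ≤ TNᗮ := by
    rintro _ ⟨x, hx, rfl⟩
    rw [Submodule.mem_orthogonal]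
    rintro _ ⟨n, hn, rfl⟩
    rw [ContinuousLinearMap.coe_coe, hinner]
    exact Submodule.inner_left_of_mem_orthogonal hx hn
  have hkT_M : kT ≤ Mᗮ := by
    intro v hv
    rw [Submodule.mem_orthogonal]
    rintro _ ⟨x, hx, rfl⟩
    rw [ContinuousLinearMap.coe_coe, ← adjoint_inner_right, (show adjoint T v = 0 from LinearMap.mem_ker.1 hv), inner_zero_right]
  have hN2_M : K₂ᗮ ≤ Mᗮ := Submodule.orthogonal_le hMK
  -- Lemma A: the left-hand side is `Mᗮ ⊓ K₂`
  have hA : Submodule.map K₂.subtype (LinearMap.ker (adjoint Tt : K₂ →ₗ[ℂ] K₁)) = Mᗮ ⊓ K₂ := by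
    ext y
    simp only [Submodule.mem_map, LinearMap.mem_ker, Submodule.mem_inf]
    constructor
    · rintro ⟨z, hz, rfl⟩
      refine ⟨(Submodule.mem_orthogonal _ _).2 ?_, z.2⟩
      rintro _ ⟨x, hx, rfl⟩
      have h1 : ⟪T x, (K₂.subtype z : H₂)⟫_ℂ = ⟪Tt ⟨x, hx⟩, z⟫_ℂ := by
        rw [Submodule.coe_inner, hTt]; rfl
      rw [ContinuousLinearMap.coe_coe, h1, ← adjoint_inner_right, (show adjoint Tt z = 0 from hz), inner_zero_right]
    · rintro ⟨hy1, hy2⟩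
      refine ⟨⟨y, hy2⟩, ?_, rfl⟩
      refine ext_inner_left ℂ fun v => ?_
      rw [inner_zero_right, ContinuousLinearMap.coe_coe, adjoint_inner_right, Submodule.coe_inner, hTt]
      exact Submodule.inner_right_of_mem_orthogonal (Submodule.mem_map_of_mem v.2) hy1
  -- the kernel of the adjoint of T is the orthogonal of the range
  have hrange : kTᗮ = (Submodule.map (T : H₁ →ₗ[ℂ] H₂) (⊤ : Submodule ℂ H₁)).topologicalClosure := by
    have h1 : kT = (Submodule.map (T : H₁ →ₗ[ℂ] H₂) (⊤ : Submodule ℂ H₁))ᗮ := by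
      ext v
      simp only [hkT, LinearMap.mem_ker, Submodule.mem_orthogonal]
      constructor
      · rintro hv _ ⟨x, -, rfl⟩
        rw [ContinuousLinearMap.coe_coe, ← adjoint_inner_right, (show adjoint T v = 0 from hv), inner_zero_right]
      · intro hv
        refine ext_inner_left ℂ fun x => ?_
        rw [inner_zero_right, ContinuousLinearMap.coe_coe, adjoint_inner_right]
        exact hv _ ⟨x, trivial, rfl⟩
    rw [h1, Submodule.orthogonal_orthogonal_eq_closure]
  have htop : Submodule.map (T : H₁ →ₗ[ℂ] H₂) (⊤ : Submodule ℂ H₁) = M ⊔ TN := by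
    rw [← Submodule.sup_orthogonal_of_hasOrthogonalProjection (K := K₁), Submodule.map_sup]
  -- Lemma B: `Mᗮ` is the closure of `TN ⊔ kT`
  have hB : Mᗮ = (TN ⊔ kT).topologicalClosure := by
    apply le_antisymm
    · have hS : (TN ⊔ kT)ᗮ ≤ Mᗮᗮ := by
        rw [← Submodule.inf_orthogonal, Submodule.orthogonal_orthogonal_eq_closure, hrange, htop]
        intro u hu
        exact aux_clos hM_TN ⟨hu.2, hu.1⟩
      calc Mᗮ = Mᗮᗮᗮ := (Submodule.triorthogonal_eq_orthogonal).symm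
        _ ≤ (TN ⊔ kT)ᗮᗮ := Submodule.orthogonal_le hS
        _ = (TN ⊔ kT).topologicalClosure := Submodule.orthogonal_orthogonal_eq_closure _
    · exact Submodule.topologicalClosure_minimal _ (sup_le hTN_M hkT_M) M.isClosed_orthogonal
  -- `P` maps `TN` into `L`
  have hTNL : Submodule.map (P : H₂ →ₗ[ℂ] H₂) TN ≤ L := by
    rw [hL]
    rintro _ ⟨w, hw, rfl⟩
    refine ⟨?_, K₂.le_orthogonal_orthogonal (hPmem w)⟩
    have h1 : w ∈ (K₂ᗮ ⊔ TN).topologicalClosure :=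
      Submodule.le_topologicalClosure _ (Submodule.mem_sup_right hw)
    have h2 : w - P w ∈ (K₂ᗮ ⊔ TN).topologicalClosure :=
      Submodule.le_topologicalClosure _ (Submodule.mem_sup_left (hPsub w))
    have h3 : P w = w - (w - P w) := (sub_sub_cancel w (P w)).symm
    rw [ContinuousLinearMap.coe_coe, h3]
    exact sub_mem h1 h2
  rw [hA]
  apply le_antisymm
  · -- `Mᗮ ⊓ K₂ ≤` RHS
    intro y hy
    obtain ⟨hy1, hy2⟩ := hy
    have hyS : y ∈ (TN ⊔ kT).topologicalClosure := by rw [← hB]; exact hy1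
    have hPy : P y = y := by rw [hPapp]; exact Submodule.starProjection_eq_self_iff.2 hy2
    have step1 : y ∈ Submodule.map (P : H₂ →ₗ[ℂ] H₂) ((TN ⊔ kT).topologicalClosure) := ⟨y, hyS, hPy⟩
    have step2 : y ∈ (Submodule.map (P : H₂ →ₗ[ℂ] H₂) (TN ⊔ kT)).topologicalClosure :=
      Submodule.topologicalClosure_map P (TN ⊔ kT) step1
    have hsup : Submodule.map (P : H₂ →ₗ[ℂ] H₂) (TN ⊔ kT) = Submodule.map (P : H₂ →ₗ[ℂ] H₂) TN ⊔ Submodule.map (P : H₂ →ₗ[ℂ] H₂) kT :=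
      Submodule.map_sup _ _ _
    have step3 : (Submodule.map (P : H₂ →ₗ[ℂ] H₂) (TN ⊔ kT)).topologicalClosure ≤
        (L ⊔ Submodule.map (P : H₂ →ₗ[ℂ] H₂) kT).topologicalClosure := by
      rw [hsup]
      exact Submodule.topologicalClosure_mono (sup_le_sup_right hTNL _)
    exact step3 step2
  · apply Submodule.topologicalClosure_minimal
    · apply sup_le
      · rw [hL]
        rintro y ⟨hy1, hy2⟩
        refine ⟨?_, ?_⟩
        · exact Submodule.topologicalClosure_minimal _ (sup_le hN2_M hTN_M)
            M.isClosed_orthogonal hy1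
        · rw [K₂.orthogonal_orthogonal] at hy2
          exact hy2
      · rintro _ ⟨v, hv, rfl⟩
        refine ⟨?_, hPmem v⟩
        have h3 : P v = v - (v - P v) := (sub_sub_cancel v (P v)).symm
        rw [ContinuousLinearMap.coe_coe, h3]
        exact sub_mem (hkT_M hv) (hN2_M (hPsub v))
    · have hK₂c : IsClosed (K₂ : Set H₂) :=
        (completeSpace_coe_iff_isComplete.1 ‹CompleteSpace K₂›).isClosed
      exact M.isClosed_orthogonal.inter hK₂c
end

section
/- Let E be a row contraction on H_E = H_C ⊕ H_A that is a contractive lifting of C (so E_j* H_C ⊆ H_C for all j) and suppose E is minimal, i.e., the smallest E-invariant closed subspace containing H_C is H_E. Then the compression A = (A₁, …, A_d), A_j = P_{H_A} E_j|_{H_A}, is completely non-coisometric: if z ∈ H_A satisfies Σ_{|α|=n} ‖A_α* z‖² = ‖z‖² for all n ∈ ℕ, then z = 0. -/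
open ContinuousLinearMap

/-- The operator Eα = E_{α₁} ⋯ E_{α_m} for a word α. -/
noncomputable def wordOp {H : Type*} [NormedAddCommGroup H] [InnerProductSpace ℂ H]
    {d : ℕ} (E : Fin d → H →L[ℂ] H) {m : ℕ} (α : Fin m → Fin d) : H →L[ℂ] H :=
  (List.ofFn fun i => E (α i)).prod

/-- The operator Aα* = A_{α_m}* ⋯ A_{α₁}* built from the compressions
A_j = P_{H_A} E_j |_{H_A}, where A_j* acts on H as P_{H_A} E_j* P_{H_A}. -/
noncomputable def adjWord {H : Type*} [NormedAddCommGroup H] [InnerProductSpace ℂ H]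
    [CompleteSpace H] {d : ℕ} (E : Fin d → H →L[ℂ] H) (HA : Submodule ℂ H)
    [CompleteSpace HA] {m : ℕ} (α : Fin m → Fin d) : H →L[ℂ] H :=
  ((List.ofFn fun i =>
      (HA.subtypeL ∘L HA.orthogonalProjection) ∘L (adjoint (E (α i))) ∘L
        (HA.subtypeL ∘L HA.orthogonalProjection)).reverse).prod

/-- Row contraction implies the adjoint row sum bound. -/
lemma row_adj_aux {H : Type*} [NormedAddCommGroup H] [InnerProductSpace ℂ H] [CompleteSpace H]
    {d : ℕ} (E : Fin d → H →L[ℂ] H)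
    (hrow : ∀ x : Fin d → H, ‖∑ j, E j (x j)‖ ^ 2 ≤ ∑ j, ‖x j‖ ^ 2)
    (w : H) : ∑ j, ‖adjoint (E j) w‖ ^ 2 ≤ ‖w‖ ^ 2 := by
  set S : ℝ := ∑ j, ‖adjoint (E j) w‖ ^ 2 with hSdef
  have hS0 : 0 ≤ S := Finset.sum_nonneg fun j _ => by positivity
  have h1 : S = RCLike.re (inner ℂ (∑ j, E j (adjoint (E j) w)) w : ℂ) := by
    rw [sum_inner, map_sum]
    refine Finset.sum_congr rfl fun j _ => ?_
    rw [← adjoint_inner_right, inner_self_eq_norm_sq]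
  have h2 : ‖∑ j, E j (adjoint (E j) w)‖ ≤ Real.sqrt S := by
    have := hrow fun j => adjoint (E j) w
    calc ‖∑ j, E j (adjoint (E j) w)‖
        = Real.sqrt (‖∑ j, E j (adjoint (E j) w)‖ ^ 2) := by
          rw [Real.sqrt_sq (norm_nonneg _)]
      _ ≤ Real.sqrt S := Real.sqrt_le_sqrt this
  have h3 : S ≤ Real.sqrt S * ‖w‖ := by
    calc S = RCLike.re (inner ℂ (∑ j, E j (adjoint (E j) w)) w : ℂ) := h1
      _ ≤ ‖∑ j, E j (adjoint (E j) w)‖ * ‖w‖ := re_inner_le_norm _ _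
      _ ≤ Real.sqrt S * ‖w‖ := by
          exact mul_le_mul_of_nonneg_right h2 (norm_nonneg _)
  have hsq : Real.sqrt S ^ 2 = S := Real.sq_sqrt hS0
  nlinarith [Real.sqrt_nonneg S, norm_nonneg w, sq_nonneg (Real.sqrt S - ‖w‖)]


lemma wordOp_snoc {H : Type*} [NormedAddCommGroup H] [InnerProductSpace ℂ H]
    {d : ℕ} (E : Fin d → H →L[ℂ] H) {n : ℕ} (β : Fin n → Fin d) (j : Fin d) :
    wordOp E (Fin.snoc β j) = (wordOp E β) ∘L (E j) := by
  unfold wordOp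
  rw [List.ofFn_succ']
  simp [Fin.snoc_castSucc, Fin.snoc_last, ContinuousLinearMap.mul_def]

lemma adjWord_snoc {H : Type*} [NormedAddCommGroup H] [InnerProductSpace ℂ H]
    [CompleteSpace H] {d : ℕ} (E : Fin d → H →L[ℂ] H) (HA : Submodule ℂ H)
    [CompleteSpace HA] {n : ℕ} (β : Fin n → Fin d) (j : Fin d) :
    adjWord E HA (Fin.snoc β j)
      = (((HA.subtypeL ∘L HA.orthogonalProjection) ∘L (adjoint (E j)) ∘L
          (HA.subtypeL ∘L HA.orthogonalProjection)) ∘L adjWord E HA β) := by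
  unfold adjWord
  rw [List.ofFn_succ']
  simp [Fin.snoc_castSucc, Fin.snoc_last, List.concat_eq_append,
    List.reverse_append, ContinuousLinearMap.mul_def]

/-- If E is a minimal contractive lifting of C on H_E = H_C ⊕ H_A, then the
compression A to H_A is completely non-coisometric. -/
theorem stmt_10
    {H : Type*} [NormedAddCommGroup H] [InnerProductSpace ℂ H] [CompleteSpace H]
    {d : ℕ} (E : Fin d → H →L[ℂ] H)
    (HC : Submodule ℂ H) (hC : IsClosed (HC : Set H))
    (HA : Submodule ℂ H) [CompleteSpace HA] (hA : HA = HCᗮ)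
    (hrow : ∀ x : Fin d → H, ‖∑ j, E j (x j)‖ ^ 2 ≤ ∑ j, ‖x j‖ ^ 2)
    (hlift : ∀ j, ∀ x ∈ HA, E j x ∈ HA)
    (hmin : (Submodule.span ℂ {y : H | ∃ (m : ℕ) (α : Fin m → Fin d) (x : H),
        x ∈ HC ∧ y = wordOp E α x}).topologicalClosure = ⊤) :
    ∀ z ∈ HA, (∀ n : ℕ, ∑ α : Fin n → Fin d, ‖adjWord E HA α z‖ ^ 2 = ‖z‖ ^ 2) →
      z = 0 := by
  subst hA
  intro z hz hzn
  haveI : CompleteSpace HC := hC.completeSpace_coe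
  set P : H →L[ℂ] H := HCᗮ.subtypeL ∘L HCᗮ.orthogonalProjection with hPdef
  have hPmem : ∀ w : H, P w ∈ HCᗮ := fun w => (HCᗮ.orthogonalProjection w).2
  have hPid : ∀ w ∈ HCᗮ, P w = w := by
    intro w hw
    exact Submodule.starProjection_eq_self_iff.mpr hw
  -- snoc decompositions
  have hsnocW : ∀ {n : ℕ} (β : Fin n → Fin d) (j : Fin d),
      wordOp E (Fin.snoc β j) = (wordOp E β) ∘L (E j) := fun β j => wordOp_snoc E β j
  have hsnocA : ∀ {n : ℕ} (β : Fin n → Fin d) (j : Fin d),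
      adjWord E HCᗮ (Fin.snoc β j)
        = (P ∘L adjoint (E j) ∘L P) ∘L adjWord E HCᗮ β := fun β j => adjWord_snoc E HCᗮ β j
  -- sum over words of length n+1 as double sum
  have hsum : ∀ (n : ℕ) (f : (Fin (n+1) → Fin d) → ℝ),
      ∑ α : Fin (n+1) → Fin d, f α = ∑ β : Fin n → Fin d, ∑ j : Fin d, f (Fin.snoc β j) := by
    intro n f
    rw [← Equiv.sum_comp
      (⟨fun p => Fin.snoc p.1 p.2, fun α => (Fin.init α, α (Fin.last n)),
        fun p => by simp, fun α => by simp [Fin.snoc_init_self]⟩ :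
        ((Fin n → Fin d) × Fin d) ≃ (Fin (n+1) → Fin d)) f]
    exact Fintype.sum_prod_type (f := fun p : (Fin n → Fin d) × Fin d => f (Fin.snoc p.1 p.2))
  -- main induction
  have key : ∀ n : ℕ, ∀ α : Fin n → Fin d,
      adjoint (wordOp E α) z ∈ HCᗮ ∧ adjWord E HCᗮ α z = adjoint (wordOp E α) z := by
    intro n
    induction n with
    | zero =>
      intro α
      have h1 : wordOp E α = 1 := by simp [wordOp]
      have h2 : adjWord E HCᗮ α = 1 := by simp [adjWord]
      have h3 : adjoint (1 : H →L[ℂ] H) = 1 := by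
        rw [show (1 : H →L[ℂ] H) = ContinuousLinearMap.id ℂ H from rfl, adjoint_id]
      rw [h1, h2, h3]
      exact ⟨hz, rfl⟩
    | succ n ih =>
      have haw : ∀ β : Fin n → Fin d, adjWord E HCᗮ β z = adjoint (wordOp E β) z :=
        fun β => (ih β).2
      have hamem : ∀ β : Fin n → Fin d, adjoint (wordOp E β) z ∈ HCᗮ :=
        fun β => (ih β).1
      have hpoint : ∀ (β : Fin n → Fin d) (j : Fin d),
          adjWord E HCᗮ (Fin.snoc β j) z = P (adjoint (E j) (adjoint (wordOp E β) z)) := by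
        intro β j
        rw [hsnocA β j]
        simp only [ContinuousLinearMap.comp_apply]
        rw [haw β, hPid _ (hamem β)]
      -- the (n+1)-sum
      have hz1 : ∑ β : Fin n → Fin d, ∑ j : Fin d,
          ‖P (adjoint (E j) (adjoint (wordOp E β) z))‖ ^ 2 = ‖z‖ ^ 2 := by
        have h := hzn (n+1)
        rw [hsum n (fun α => ‖adjWord E HCᗮ α z‖ ^ 2)] at h
        simp only [hpoint] at h
        exact h
      -- the n-sum
      have hz2 : ∑ β : Fin n → Fin d, ‖adjoint (wordOp E β) z‖ ^ 2 = ‖z‖ ^ 2 := by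
        have h := hzn n
        simp only [haw] at h
        exact h
      -- pythagoras: for each w, ‖w‖^2 = ‖Pc w‖^2 + ‖P w‖^2
      have hpyth : ∀ w : H, ‖w‖ ^ 2
          = ‖(HC.orthogonalProjection w : H)‖ ^ 2 + ‖P w‖ ^ 2 := by
        intro w
        have := Submodule.norm_sq_eq_add_norm_sq_projection w HC
        simpa [hPdef] using this
      -- defect sum is ≤ 0
      have hdef : ∑ β : Fin n → Fin d, ∑ j : Fin d,
          ‖(HC.orthogonalProjection (adjoint (E j) (adjoint (wordOp E β) z)) : H)‖ ^ 2 = 0 := by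
        have hle : ∑ β : Fin n → Fin d, ∑ j : Fin d,
            ‖adjoint (E j) (adjoint (wordOp E β) z)‖ ^ 2 ≤ ‖z‖ ^ 2 := by
          calc ∑ β : Fin n → Fin d, ∑ j : Fin d,
              ‖adjoint (E j) (adjoint (wordOp E β) z)‖ ^ 2
              ≤ ∑ β : Fin n → Fin d, ‖adjoint (wordOp E β) z‖ ^ 2 :=
                Finset.sum_le_sum fun β _ => row_adj_aux E hrow _
            _ = ‖z‖ ^ 2 := hz2
        have hsplit : ∑ β : Fin n → Fin d, ∑ j : Fin d,
            ‖adjoint (E j) (adjoint (wordOp E β) z)‖ ^ 2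
            = (∑ β : Fin n → Fin d, ∑ j : Fin d,
                ‖(HC.orthogonalProjection (adjoint (E j) (adjoint (wordOp E β) z)) : H)‖ ^ 2)
              + ∑ β : Fin n → Fin d, ∑ j : Fin d,
                ‖P (adjoint (E j) (adjoint (wordOp E β) z))‖ ^ 2 := by
          rw [← Finset.sum_add_distrib]
          refine Finset.sum_congr rfl fun β _ => ?_
          rw [← Finset.sum_add_distrib]
          exact Finset.sum_congr rfl fun j _ => hpyth _
        have hge0 : (0:ℝ) ≤ ∑ β : Fin n → Fin d, ∑ j : Fin d,
            ‖(HC.orthogonalProjection (adjoint (E j) (adjoint (wordOp E β) z)) : H)‖ ^ 2 :=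
          Finset.sum_nonneg fun β _ => Finset.sum_nonneg fun j _ => by positivity
        rw [hsplit, hz1] at hle
        linarith
      have hzero : ∀ (β : Fin n → Fin d) (j : Fin d),
          (HC.orthogonalProjection (adjoint (E j) (adjoint (wordOp E β) z)) : H) = 0 := by
        intro β j
        have h1 := (Finset.sum_eq_zero_iff_of_nonneg
          (fun β _ => Finset.sum_nonneg fun j _ => by positivity)).mp hdef β (Finset.mem_univ β)
        have h2 := (Finset.sum_eq_zero_iff_of_nonneg
          (fun j _ => by positivity)).mp h1 j (Finset.mem_univ j)
        have := pow_eq_zero_iff (n := 2) (by norm_num) |>.mp h2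
        exact norm_eq_zero.mp this
      have hmemA : ∀ (β : Fin n → Fin d) (j : Fin d),
          adjoint (E j) (adjoint (wordOp E β) z) ∈ HCᗮ := by
        intro β j
        have hdec := Submodule.starProjection_add_starProjection_orthogonal (K := HC)
          (adjoint (E j) (adjoint (wordOp E β) z))
        rw [show HC.starProjection _ = 0 from hzero β j, zero_add] at hdec
        rw [← hdec]
        exact (HCᗮ.orthogonalProjection _).2
      intro α
      have hαeq : Fin.snoc (Fin.init α) (α (Fin.last n)) = α := Fin.snoc_init_self α
      have hadj : adjoint (wordOp E α) z
          = adjoint (E (α (Fin.last n))) (adjoint (wordOp E (Fin.init α)) z) := by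
        conv_lhs => rw [← hαeq]
        rw [hsnocW, adjoint_comp]
        rfl
      constructor
      · rw [hadj]; exact hmemA _ _
      · have := hpoint (Fin.init α) (α (Fin.last n))
        rw [hαeq] at this
        rw [this, hadj, hPid _ (hmemA _ _)]
  -- orthogonality to all generators
  have horth : z ∈ (Submodule.span ℂ {y : H | ∃ (m : ℕ) (α : Fin m → Fin d) (x : H),
      x ∈ HC ∧ y = wordOp E α x})ᗮ := by
    rw [Submodule.mem_orthogonal]
    intro u hu
    induction hu using Submodule.span_induction with
    | mem y hy =>
      obtain ⟨m, α, x, hx, rfl⟩ := hy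
      have h1 : (inner ℂ (wordOp E α x) z : ℂ) = inner ℂ x (adjoint (wordOp E α) z) :=
        (adjoint_inner_right (wordOp E α) x z).symm
      rw [h1]
      exact ((Submodule.mem_orthogonal HC _).mp (key m α).1) x hx
    | zero => simp
    | add x y hx hy ihx ihy => rw [inner_add_left, ihx, ihy, add_zero]
    | smul a x hx ihx => rw [inner_smul_left, ihx, mul_zero]
  have hbot : (Submodule.span ℂ {y : H | ∃ (m : ℕ) (α : Fin m → Fin d) (x : H),
      x ∈ HC ∧ y = wordOp E α x})ᗮ = ⊥ :=
    Submodule.topologicalClosure_eq_top_iff.mp hmin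
  rw [hbot] at horth
  exact horth
end
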